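/- (Optimization rule 6 is support-preserving) For any x : Gen α, b : Bool, and k : b = true → Gen α, the generators pick x (assume b k) and (if h : b = true then pick x (k h) else x) have the same support: for all a, a ∈ ⟦pick x (assume b k)⟧ ↔ a ∈ ⟦if h : b = true then pick x (k h) else x⟧. -/
import Mathlib


namespace PBT

inductive Gen : Type → Type 1 where
  | pure {α : Type} : α → Gen α
  | pick {α : Type} : Gen α → Gen α → Gen α
  | bind {α β : Type} : Gen α → (α → Gen β) → Gen β
  | indexed {α : Type} : (ℕ → Gen (Option α)) → Gen α
  | assume {α : Type} : (b : Bool) → (b = true → Gen α) → Gen α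

instance : Pure Gen := ⟨Gen.pure⟩
instance : Bind Gen := ⟨Gen.bind⟩

def Gen.support : {α : Type} → Gen α → Set α
  | _, .pure a' => {a | a = a'}
  | _, .pick x y => {a | a ∈ x.support ∨ a ∈ y.support}
  | _, .bind x f => {a | ∃ a', a' ∈ x.support ∧ a ∈ (f a').support}
  | _, .indexed f => {a | (∃ n, some a ∈ (f n).support) ∧
      (∀ a' n, some a' ∈ (f n).support → some a' ∈ (f (n + 1)).support)}
  | _, .assume b k => {a | ∃ h : b = true, a ∈ (k h).support}

notation (priority := high) "⟦" g "⟧" => Gen.support g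

theorem opt_rule6_support {α : Type} (x : Gen α) (b : Bool) (k : b = true → Gen α)
    (a : α) :
    a ∈ ⟦Gen.pick x (Gen.assume b k)⟧ ↔
      a ∈ ⟦if h : b = true then Gen.pick x (k h) else x⟧ := by
  by_cases h : b = true <;> simp [h, Gen.support]

end PBT
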